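/- arXiv:2006.02191 — 4 statements merged into one kernel-verified Lean document; each statement's English description precedes it below -/
import Mathlib

section
/- Let F be an automorphism of a probability space (M, m) and A : M → ℝ a square-integrable observable with zero mean, whose correlations ρ_n = ∫ A(x)·A(F^n x) dm satisfy Σ_{n≥0} n·|ρ_n| < ∞. Then the sequence ‖Σ_{n=0}^{N-1} A∘F^n‖_{L²} is bounded in N if and only if Σ² := Σ_{n=-∞}^{∞} ρ_n equals 0 (where ρ_{-n} = ρ_n). -/
open MeasureTheory
open scoped ENNReal NNReal

private lemma l2_mul_integrable {α : Type*} [MeasurableSpace α] {μ : Measure α} {f g : α → ℝ}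
    (hf : MemLp f 2 μ) (hg : MemLp g 2 μ) : Integrable (fun x => f x * g x) μ := by
  have hgint : Integrable (fun x => (1/2 : ℝ) * (f x ^ 2 + g x ^ 2)) μ :=
    (hf.integrable_sq.add hg.integrable_sq).const_mul (1/2 : ℝ)
  refine Integrable.mono' hgint
    (hf.aestronglyMeasurable.mul hg.aestronglyMeasurable) ?_
  filter_upwards with x
  rw [Real.norm_eq_abs, abs_mul]
  nlinarith [sq_nonneg (|f x| - |g x|), sq_abs (f x), sq_abs (g x), abs_nonneg (f x),
    abs_nonneg (g x)]

private lemma toReal_eLpNorm_two {α : Type*} [MeasurableSpace α] {μ : Measure α} {f : α → ℝ}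
    (hf : MemLp f 2 μ) :
    (eLpNorm f 2 μ).toReal = Real.sqrt (∫ x, f x ^ 2 ∂μ) := by
  rw [hf.eLpNorm_eq_integral_rpow_norm two_ne_zero ENNReal.ofNat_ne_top]
  have h2 : (2 : ℝ≥0∞).toReal = 2 := by simp
  have hx : ∀ x : α, ‖f x‖ ^ (2 : ℝ≥0∞).toReal = f x ^ 2 := by
    intro x
    rw [h2, show ((2:ℝ)) = ((2:ℕ):ℝ) by norm_num, Real.rpow_natCast, Real.norm_eq_abs, sq_abs]
  simp only [hx]
  rw [ENNReal.toReal_ofReal (Real.rpow_nonneg (integral_nonneg fun x => sq_nonneg _) _)]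
  rw [h2, Real.sqrt_eq_rpow]
  norm_num

private lemma sum_sum_range (f : ℕ → ℝ) (N : ℕ) :
    ∑ j ∈ Finset.range N, ∑ k ∈ Finset.range j, f k
      = ∑ k ∈ Finset.range N, ((N : ℝ) - 1 - k) * f k := by
  induction N with
  | zero => simp
  | succ N ih =>
      rw [Finset.sum_range_succ, ih, Finset.sum_range_succ]
      have h : ∀ k : ℕ, (((N : ℕ) + 1 : ℝ) - 1 - k) * f k = ((N : ℝ) - 1 - k) * f k + f k := by
        intro k; ring
      push_cast
      simp only [h, Finset.sum_add_distrib]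
      ring

/-- Gottschalk–Hedlund / Green–Kubo criterion.  Let `F` be an automorphism of
a probability space `(M, m)` and `A` a square-integrable observable of zero mean whose
correlations `ρ n = ∫ A · (A ∘ F^n) dm` satisfy `Σ_{n ≥ 0} n |ρ n| < ∞`.  Then the `L²` norms of
the Birkhoff sums `Σ_{n<N} A ∘ F^n` are bounded in `N` if and only if
`Σ² = Σ_{n=-∞}^{∞} ρ_n = ρ 0 + 2 Σ_{n ≥ 1} ρ n` vanishes (using `ρ_{-n} = ρ_n`). -/
theorem bounded_birkhoff_L2_iff_variance_zero
    {M : Type*} [MeasurableSpace M] (m : Measure M) [IsProbabilityMeasure m]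
    (F : M ≃ᵐ M) (hF : MeasurePreserving F m m)
    (A : M → ℝ) (hA : MemLp A 2 m) (hAmean : ∫ x, A x ∂m = 0)
    (ρ : ℕ → ℝ) (hρ : ∀ n, ρ n = ∫ x, A x * A ((⇑F)^[n] x) ∂m)
    (hsum : Summable fun n : ℕ => (n : ℝ) * |ρ n|) :
    (∃ C : ℝ, ∀ N : ℕ,
        (eLpNorm (fun x => ∑ n ∈ Finset.range N, A ((⇑F)^[n] x)) 2 m).toReal ≤ C)
      ↔ ρ 0 + 2 * ∑' n : ℕ, ρ (n + 1) = 0 := by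
  -- basic objects
  have hFn : ∀ n, MeasurePreserving ((⇑F)^[n]) m m := fun n => hF.iterate n
  have hEmb : ∀ n, MeasurableEmbedding ((⇑F)^[n]) := by
    intro n
    induction n with
    | zero => simpa using MeasurableEmbedding.id
    | succ n ih =>
        rw [Function.iterate_succ']
        exact F.measurableEmbedding.comp ih
  have hAn : ∀ n, MemLp (fun x => A ((⇑F)^[n] x)) 2 m := fun n =>
    hA.comp_measurePreserving (hFn n)
  -- correlations
  have hcorr : ∀ i k, ∫ x, A ((⇑F)^[i] x) * A ((⇑F)^[i + k] x) ∂m = ρ k := by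
    intro i k
    have h1 : (∫ x, A ((⇑F)^[i] x) * A ((⇑F)^[i + k] x) ∂m)
        = ∫ x, (fun y => A y * A ((⇑F)^[k] y)) ((⇑F)^[i] x) ∂m := by
      refine integral_congr_ae (Filter.Eventually.of_forall fun x => ?_)
      simp only [add_comm i k, Function.iterate_add_apply]
    rw [h1]
    exact ((hFn i).integral_comp (hEmb i) (fun y => A y * A ((⇑F)^[k] y))).trans (hρ k).symm
  -- the squared L² norms
  set B : ℕ → ℝ := fun N => ∫ x, (∑ n ∈ Finset.range N, A ((⇑F)^[n] x)) ^ 2 ∂m with hBdef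
  have hBnonneg : ∀ N, 0 ≤ B N := fun N => integral_nonneg fun x => sq_nonneg _
  have hSN : ∀ N, MemLp (fun x => ∑ n ∈ Finset.range N, A ((⇑F)^[n] x)) 2 m := fun N =>
    memLp_finset_sum _ fun i _ => hAn i
  have hnorm : ∀ N,
      (eLpNorm (fun x => ∑ n ∈ Finset.range N, A ((⇑F)^[n] x)) 2 m).toReal
        = Real.sqrt (B N) := fun N => toReal_eLpNorm_two (hSN N)
  -- the recursion for B
  have hBrec : ∀ N, B (N + 1) = B N + (ρ 0 + 2 * ∑ k ∈ Finset.range N, ρ (k + 1)) := by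
    intro N
    have hint1 : Integrable (fun x =>
        (∑ n ∈ Finset.range N, A ((⇑F)^[n] x)) ^ 2) m := (hSN N).integrable_sq
    have hint2 : Integrable (fun x =>
        (∑ n ∈ Finset.range N, A ((⇑F)^[n] x)) * A ((⇑F)^[N] x)) m :=
      l2_mul_integrable (hSN N) (hAn N)
    have hint3 : Integrable (fun x => A ((⇑F)^[N] x) ^ 2) m := (hAn N).integrable_sq
    have hexp : ∀ x : M,
        (∑ n ∈ Finset.range (N + 1), A ((⇑F)^[n] x)) ^ 2
          = (∑ n ∈ Finset.range N, A ((⇑F)^[n] x)) ^ 2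
            + ((2 : ℝ) * ((∑ n ∈ Finset.range N, A ((⇑F)^[n] x)) * A ((⇑F)^[N] x))
              + A ((⇑F)^[N] x) ^ 2) := by
      intro x
      rw [Finset.sum_range_succ]
      ring
    have hB1 : B (N + 1) = B N + ((2 : ℝ) * ∫ x,
        (∑ n ∈ Finset.range N, A ((⇑F)^[n] x)) * A ((⇑F)^[N] x) ∂m
          + ∫ x, A ((⇑F)^[N] x) ^ 2 ∂m) := by
      have hint4 : Integrable (fun x =>
          (2 : ℝ) * ((∑ n ∈ Finset.range N, A ((⇑F)^[n] x)) * A ((⇑F)^[N] x))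
            + A ((⇑F)^[N] x) ^ 2) m := (hint2.const_mul 2).add hint3
      simp only [hBdef, hexp]
      rw [integral_add hint1 hint4, integral_add (hint2.const_mul 2) hint3, integral_const_mul 2]
    -- cross term
    have hcross : ∫ x, (∑ n ∈ Finset.range N, A ((⇑F)^[n] x)) * A ((⇑F)^[N] x) ∂m
        = ∑ k ∈ Finset.range N, ρ (k + 1) := by
      have hmul : ∀ x : M, (∑ n ∈ Finset.range N, A ((⇑F)^[n] x)) * A ((⇑F)^[N] x)
          = ∑ n ∈ Finset.range N, A ((⇑F)^[n] x) * A ((⇑F)^[N] x) := by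
        intro x; rw [Finset.sum_mul]
      simp only [hmul]
      rw [integral_finset_sum _ fun i _ => l2_mul_integrable (hAn i) (hAn N)]
      have h2 : ∀ i ∈ Finset.range N,
          ∫ x, A ((⇑F)^[i] x) * A ((⇑F)^[N] x) ∂m = ρ (N - i) := by
        intro i hi
        have hiN : i + (N - i) = N := Nat.add_sub_cancel' (Finset.mem_range.mp hi).le
        conv_lhs => rw [← hiN]
        exact hcorr i (N - i)
      rw [Finset.sum_congr rfl h2, ← Finset.sum_range_reflect (fun k => ρ (k + 1)) N]
      refine Finset.sum_congr rfl fun i hi => ?_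
      have hi' : i < N := Finset.mem_range.mp hi
      congr 1
      omega
    -- last term
    have hlast : ∫ x, A ((⇑F)^[N] x) ^ 2 ∂m = ρ 0 := by
      have h0 : ∀ x : M, A ((⇑F)^[N] x) ^ 2 = (fun y => A y * A ((⇑F)^[0] y)) ((⇑F)^[N] x) := by
        intro x; simp [sq]
      simp only [h0]
      exact ((hFn N).integral_comp (hEmb N) (fun y => A y * A ((⇑F)^[0] y))).trans (hρ 0).symm
    rw [hB1, hcross, hlast]
    ring
  have hBsum : ∀ N, B N = ∑ j ∈ Finset.range N,
      (ρ 0 + 2 * ∑ k ∈ Finset.range j, ρ (k + 1)) := by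
    intro N
    induction N with
    | zero => simp [hBdef]
    | succ N ih => rw [hBrec N, ih, Finset.sum_range_succ]
  -- closed form for B
  have hBclosed : ∀ N, B N = (N : ℝ) * ρ 0
      + 2 * ∑ k ∈ Finset.range N, ((N : ℝ) - 1 - k) * ρ (k + 1) := by
    intro N
    rw [hBsum N, Finset.sum_add_distrib, Finset.sum_const, Finset.card_range,
      ← Finset.mul_sum, sum_sum_range (fun k => ρ (k + 1)) N]
    push_cast
    ring
  -- summability bookkeeping
  set K0 : ℝ := ∑' n : ℕ, (n : ℝ) * |ρ n| with hK0
  have hg_nonneg : ∀ n : ℕ, 0 ≤ (n : ℝ) * |ρ n| := fun n =>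
    mul_nonneg (Nat.cast_nonneg n) (abs_nonneg _)
  have hsum1 : Summable fun k : ℕ => ((k : ℝ) + 1) * |ρ (k + 1)| := by
    have h := (summable_nat_add_iff 1).mpr hsum
    push_cast at h
    exact h
  have hsumabs : Summable fun k : ℕ => |ρ (k + 1)| := by
    refine Summable.of_nonneg_of_le (fun k => abs_nonneg _) (fun k => ?_) hsum1
    nlinarith [abs_nonneg (ρ (k + 1))]
  have hsumρ : Summable fun k : ℕ => ρ (k + 1) := hsumabs.of_abs
  have htailK : ∑' k : ℕ, ((k : ℝ) + 1) * |ρ (k + 1)| = K0 := by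
    rw [hK0, Summable.tsum_eq_zero_add hsum]
    push_cast
    simp
  have hpartial : ∀ N : ℕ, ∑ k ∈ Finset.range N, ((k : ℝ) + 1) * |ρ (k + 1)| ≤ K0 := by
    intro N
    rw [← htailK]
    exact Summable.sum_le_tsum _ (fun k _ => mul_nonneg (by positivity) (abs_nonneg _)) hsum1
  -- tail bound
  have htail : ∀ N : ℕ, (N : ℝ) * |∑' n : ℕ, ρ (n + N + 1)| ≤ K0 := by
    intro N
    have hs1' : Summable fun n : ℕ => |ρ (n + N + 1)| := by
      have h := (summable_nat_add_iff (f := fun k : ℕ => |ρ (k + 1)|) N).mpr hsumabs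
      exact h
    have hs2 : Summable fun n : ℕ => ((n : ℝ) + N + 1) * |ρ (n + N + 1)| := by
      have h := (summable_nat_add_iff (f := fun n : ℕ => (n : ℝ) * |ρ n|) (N + 1)).mpr hsum
      have h' : ∀ n : ℕ, (((n + (N + 1) : ℕ) : ℝ)) * |ρ (n + (N + 1))|
          = ((n : ℝ) + N + 1) * |ρ (n + N + 1)| := by
        intro n
        have hnn : n + (N + 1) = n + N + 1 := by omega
        rw [hnn]; push_cast; ring
      simpa only [h'] using h
    have h1 : |∑' n : ℕ, ρ (n + N + 1)| ≤ ∑' n : ℕ, |ρ (n + N + 1)| := by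
      simpa [Real.norm_eq_abs] using norm_tsum_le_tsum_norm (f := fun n : ℕ => ρ (n + N + 1))
        (by simpa [Real.norm_eq_abs] using hs1')
    have h2 : (N : ℝ) * ∑' n : ℕ, |ρ (n + N + 1)|
        ≤ ∑' n : ℕ, ((n : ℝ) + N + 1) * |ρ (n + N + 1)| := by
      rw [← tsum_mul_left]
      refine Summable.tsum_le_tsum (fun n => ?_) (hs1'.mul_left _) hs2
      have hle : (N : ℝ) ≤ (n : ℝ) + N + 1 := by
        have : (0:ℝ) ≤ (n:ℝ) := Nat.cast_nonneg n
        linarith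
      nlinarith [abs_nonneg (ρ (n + N + 1))]
    have h3 : ∑' n : ℕ, ((n : ℝ) + N + 1) * |ρ (n + N + 1)| ≤ K0 := by
      have heq := Summable.sum_add_tsum_nat_add (f := fun n : ℕ => (n : ℝ) * |ρ n|) (N + 1) hsum
      have h' : ∀ n : ℕ, (((n + (N + 1) : ℕ) : ℝ)) * |ρ (n + (N + 1))|
          = ((n : ℝ) + N + 1) * |ρ (n + N + 1)| := by
        intro n
        have hnn : n + (N + 1) = n + N + 1 := by omega
        rw [hnn]; push_cast; ring
      have hpos : 0 ≤ ∑ i ∈ Finset.range (N + 1), (i : ℝ) * |ρ i| :=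
        Finset.sum_nonneg fun i _ => hg_nonneg i
      rw [hK0, ← heq]
      simp only [h'] at heq ⊢
      linarith
    calc (N : ℝ) * |∑' n : ℕ, ρ (n + N + 1)|
        ≤ (N : ℝ) * ∑' n : ℕ, |ρ (n + N + 1)| :=
          mul_le_mul_of_nonneg_left h1 (Nat.cast_nonneg N)
      _ ≤ ∑' n : ℕ, ((n : ℝ) + N + 1) * |ρ (n + N + 1)| := h2
      _ ≤ K0 := h3
  -- key uniform estimate
  set Sig2 : ℝ := ρ 0 + 2 * ∑' n : ℕ, ρ (n + 1) with hSig2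
  have hkey : ∀ N : ℕ, |B N - (N : ℝ) * Sig2| ≤ 4 * K0 := by
    intro N
    have hsplit : ∑' n : ℕ, ρ (n + 1)
        = ∑ k ∈ Finset.range N, ρ (k + 1) + ∑' n : ℕ, ρ (n + N + 1) :=
      (Summable.sum_add_tsum_nat_add (f := fun k : ℕ => ρ (k + 1)) N hsumρ).symm
    have hS1 : ∑ k ∈ Finset.range N, ((N : ℝ) - 1 - k) * ρ (k + 1)
        = (N : ℝ) * (∑ k ∈ Finset.range N, ρ (k + 1))
          - ∑ k ∈ Finset.range N, ((k : ℝ) + 1) * ρ (k + 1) := by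
      rw [Finset.mul_sum, ← Finset.sum_sub_distrib]
      exact Finset.sum_congr rfl fun k _ => by ring
    have hEq : B N - (N : ℝ) * Sig2
        = -2 * (∑ k ∈ Finset.range N, ((k : ℝ) + 1) * ρ (k + 1))
          - 2 * (N : ℝ) * ∑' n : ℕ, ρ (n + N + 1) := by
      rw [hBclosed N, hSig2, hsplit, hS1]
      ring
    have hY : |∑ k ∈ Finset.range N, ((k : ℝ) + 1) * ρ (k + 1)| ≤ K0 := by
      calc |∑ k ∈ Finset.range N, ((k : ℝ) + 1) * ρ (k + 1)|
          ≤ ∑ k ∈ Finset.range N, |((k : ℝ) + 1) * ρ (k + 1)| :=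
            Finset.abs_sum_le_sum_abs _ _
        _ = ∑ k ∈ Finset.range N, ((k : ℝ) + 1) * |ρ (k + 1)| :=
            Finset.sum_congr rfl fun k _ => by
              rw [abs_mul, abs_of_nonneg (by positivity : (0:ℝ) ≤ (k : ℝ) + 1)]
        _ ≤ K0 := hpartial N
    have hT := htail N
    rw [hEq]
    have htri : |-2 * (∑ k ∈ Finset.range N, ((k : ℝ) + 1) * ρ (k + 1))
          - 2 * (N : ℝ) * ∑' n : ℕ, ρ (n + N + 1)|
        ≤ |(-2 : ℝ) * (∑ k ∈ Finset.range N, ((k : ℝ) + 1) * ρ (k + 1))|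
          + |2 * (N : ℝ) * ∑' n : ℕ, ρ (n + N + 1)| := abs_sub _ _
    have ha : |(-2 : ℝ) * (∑ k ∈ Finset.range N, ((k : ℝ) + 1) * ρ (k + 1))|
        = 2 * |∑ k ∈ Finset.range N, ((k : ℝ) + 1) * ρ (k + 1)| := by
      rw [abs_mul]; norm_num
    have hb : |2 * (N : ℝ) * ∑' n : ℕ, ρ (n + N + 1)|
        = 2 * ((N : ℝ) * |∑' n : ℕ, ρ (n + N + 1)|) := by
      rw [abs_mul, abs_mul]
      rw [abs_of_nonneg (by norm_num : (0:ℝ) ≤ 2), abs_of_nonneg (Nat.cast_nonneg N)]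
      ring
    rw [ha, hb] at htri
    linarith
  -- conclusion
  constructor
  · rintro ⟨C, hC⟩
    by_contra hne
    have hSpos : 0 < |Sig2| := abs_pos.mpr hne
    obtain ⟨N, hN⟩ := exists_nat_gt ((C ^ 2 + 4 * K0) / |Sig2|)
    have hBle : B N ≤ C ^ 2 := by
      have h1 := hC N
      rw [hnorm N] at h1
      have h0 : 0 ≤ Real.sqrt (B N) := Real.sqrt_nonneg _
      have h2 := Real.sq_sqrt (hBnonneg N)
      nlinarith
    have htri : |(N : ℝ) * Sig2| ≤ |B N| + |B N - (N : ℝ) * Sig2| := by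
      have h := abs_sub (B N) (B N - (N : ℝ) * Sig2)
      have h' : B N - (B N - (N : ℝ) * Sig2) = (N : ℝ) * Sig2 := by ring
      rw [h'] at h
      linarith
    have hNb : (N : ℝ) * |Sig2| ≤ C ^ 2 + 4 * K0 := by
      rw [abs_mul, abs_of_nonneg (Nat.cast_nonneg N)] at htri
      rw [abs_of_nonneg (hBnonneg N)] at htri
      have := hkey N
      linarith
    rw [div_lt_iff₀ hSpos] at hN
    linarith
  · intro h0
    refine ⟨Real.sqrt (4 * K0), fun N => ?_⟩
    rw [hnorm N]
    apply Real.sqrt_le_sqrt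
    have h := hkey N
    rw [h0, mul_zero, sub_zero] at h
    exact (abs_le.mp h).2
end

section
/- Let α ∈ 𝔻(κ) be a Diophantine vector in 𝕋^m, i.e. there is D > 0 with |⟨k, α⟩| ≥ D|k|^{-κ} (distance to nearest integer) for all nonzero k ∈ ℤ^m, and let 0 < r < κ. Then there is a constant C such that for every zero-mean φ in the Sobolev space H^r(𝕋^m) and every N ≥ 1, the Birkhoff sum φ_N(x) = Σ_{n=0}^{N-1} φ(x + nα) satisfies ‖φ_N‖_{L²} ≤ C · ‖φ‖_{H^r} · N^{1 - r/κ}. -/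
open Complex Real


lemma norm_exp_two_pi_sub_one' (x : ℝ) :
    ‖Complex.exp (2 * π * Complex.I * x) - 1‖ = 2 * |Real.sin (π * x)| := by
  have e1 : Complex.exp (2 * π * Complex.I * x)
      = Complex.exp ((↑(π * x) : ℂ) * Complex.I) * Complex.exp ((↑(π * x) : ℂ) * Complex.I) := by
    rw [← Complex.exp_add]; push_cast; ring_nf
  have e2 : (1 : ℂ)
      = Complex.exp ((↑(π * x) : ℂ) * Complex.I) * Complex.exp (-(↑(π * x) : ℂ) * Complex.I) := by
    rw [← Complex.exp_add]; simp
  have e3 : Complex.exp ((↑(π * x) : ℂ) * Complex.I) - Complex.exp (-(↑(π * x) : ℂ) * Complex.I)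
      = 2 * Complex.I * Complex.sin (↑(π * x)) := by
    rw [Complex.sin]
    linear_combination (Complex.exp ((↑(π * x) : ℂ) * Complex.I)
      - Complex.exp (-(↑(π * x) : ℂ) * Complex.I)) * Complex.I_sq
  have e4 : Complex.exp (2 * π * Complex.I * x) - 1
      = Complex.exp ((↑(π * x) : ℂ) * Complex.I) * (2 * Complex.I * Complex.sin (↑(π * x))) := by
    linear_combination e1 - e2 + Complex.exp ((↑(π * x) : ℂ) * Complex.I) * e3
  rw [e4, norm_mul, Complex.norm_exp_ofReal_mul_I, one_mul,
    ← Complex.ofReal_sin]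
  simp [norm_mul]
  rw [show ((π : ℂ) * x) = ((π * x : ℝ) : ℂ) by push_cast; ring, ← Complex.ofReal_sin,
    Complex.norm_real, Real.norm_eq_abs]

lemma norm_geom_sum_le (θ : ℝ) {δ : ℝ} (hδ : 0 < δ) (hp : ∀ p : ℤ, δ ≤ |θ - (p : ℝ)|) (N : ℕ) :
    ‖∑ n ∈ Finset.range N, Complex.exp (2 * π * Complex.I * n * θ)‖ ≤ 1 / (2 * δ) := by
  have hπ := Real.pi_pos
  set x : ℝ := θ - round θ with hxdef
  have hx2 : |x| ≤ 1 / 2 := abs_sub_round θ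
  have hxδ : δ ≤ |x| := hp (round θ)
  have h1 : 2 * |x| ≤ Real.sin (π * |x|) := by
    have h := Real.mul_le_sin (x := π * |x|) (by positivity)
      (by nlinarith [abs_nonneg x])
    calc 2 * |x| = 2 / π * (π * |x|) := by field_simp
      _ ≤ _ := h
  have h2 : Real.sin (π * |x|) ≤ |Real.sin (π * x)| := by
    rcases abs_cases x with ⟨h, _⟩ | ⟨h, _⟩
    · rw [h]; exact le_abs_self _
    · rw [h, show π * -x = -(π * x) by ring, Real.sin_neg]
      exact neg_le_abs _
  set z : ℂ := Complex.exp (2 * π * Complex.I * θ) with hzdef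
  have hzx : z = Complex.exp (2 * π * Complex.I * x) := by
    rw [hzdef, show (2 * (π : ℂ) * Complex.I * (θ : ℂ))
        = 2 * π * Complex.I * (x : ℂ) + (round θ : ℤ) * (2 * π * Complex.I) by
      push_cast [hxdef]; ring, Complex.exp_add, Complex.exp_int_mul_two_pi_mul_I, mul_one]
  have hlow : 4 * δ ≤ ‖z - 1‖ := by
    rw [hzx, norm_exp_two_pi_sub_one']
    nlinarith
  have hz1 : z ≠ 1 := by
    intro h
    rw [h, sub_self, norm_zero] at hlow
    nlinarith
  have hnz : ‖z‖ = 1 := by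
    rw [hzx, show (2 * (π : ℂ) * Complex.I * (x : ℂ)) = ((2 * π * x : ℝ) : ℂ) * Complex.I by
      push_cast; ring, Complex.norm_exp_ofReal_mul_I]
  have hterm : ∀ n : ℕ, Complex.exp (2 * π * Complex.I * n * θ) = z ^ n := by
    intro n
    rw [hzdef, ← Complex.exp_nat_mul]
    congr 1
    push_cast; ring
  calc ‖∑ n ∈ Finset.range N, Complex.exp (2 * π * Complex.I * n * θ)‖
      = ‖(z ^ N - 1) / (z - 1)‖ := by
        rw [Finset.sum_congr rfl (fun n _ => hterm n), geom_sum_eq hz1]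
    _ = ‖z ^ N - 1‖ / ‖z - 1‖ := norm_div _ _
    _ ≤ 2 / (4 * δ) := by
        apply div_le_div₀ (by norm_num) ?_ (by positivity) hlow
        calc ‖z ^ N - 1‖ ≤ ‖z ^ N‖ + 1 := by
              simpa using norm_sub_le (z ^ N) 1
          _ = 2 := by rw [norm_pow, hnz]; norm_num
    _ = 1 / (2 * δ) := by field_simp; ring

lemma norm_geom_sum_le_card (θ : ℝ) (N : ℕ) :
    ‖∑ n ∈ Finset.range N, Complex.exp (2 * π * Complex.I * n * θ)‖ ≤ (N : ℝ) := by
  calc ‖∑ n ∈ Finset.range N, Complex.exp (2 * π * Complex.I * n * θ)‖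
      ≤ ∑ n ∈ Finset.range N, ‖Complex.exp (2 * π * Complex.I * n * θ)‖ := norm_sum_le _ _
    _ = ∑ n ∈ Finset.range N, (1 : ℝ) := by
        refine Finset.sum_congr rfl fun n _ => ?_
        rw [show (2 * (π : ℂ) * Complex.I * n * (θ : ℂ))
            = ((2 * π * n * θ : ℝ) : ℂ) * Complex.I by push_cast; ring,
          Complex.norm_exp_ofReal_mul_I]
    _ = (N : ℝ) := by simp

/-- Let `α ∈ 𝔻(κ)` be a Diophantine vector in `𝕋^m` (so
`dist(⟨k,α⟩, ℤ) ≥ D |k|^{-κ}` for every nonzero `k ∈ ℤ^m`), and let `0 < r < κ`.  Then there is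
a constant `C` such that for every zero-mean `φ ∈ H^r(𝕋^m)`, described through its Fourier
coefficients `a : ℤ^m → ℂ` with `a 0 = 0` (so that `‖φ‖²_{H^r} = Σ |k|^{2r} |a_k|²` and, by
Parseval, `‖φ_N‖²_{L²} = Σ_k |a_k|² |A_k(N)|²` where `A_k(N) = Σ_{n<N} e^{2πi n ⟨k,α⟩}`), one
has `‖φ_N‖_{L²} ≤ C ‖φ‖_{H^r} N^{1 - r/κ}` for all `N ≥ 1`. -/
theorem diophantine_birkhoff_sobolev_bound
    (m : ℕ) (hm : 1 ≤ m) (κ r : ℝ) (hr : 0 < r) (hrκ : r < κ)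
    (α : Fin m → ℝ) (D : ℝ) (hD : 0 < D)
    (hdioph : ∀ k : Fin m → ℤ, k ≠ 0 → ∀ p : ℤ,
      D * ‖(fun i => (k i : ℝ))‖ ^ (-κ) ≤ |(∑ i, (k i : ℝ) * α i) - p|) :
    ∃ C : ℝ, 0 < C ∧ ∀ (a : (Fin m → ℤ) → ℂ), a 0 = 0 →
      Summable (fun k : Fin m → ℤ => ‖(fun i => (k i : ℝ))‖ ^ (2 * r) * ‖a k‖ ^ 2) →
      ∀ N : ℕ, 1 ≤ N →
        (∑' k : Fin m → ℤ, ‖a k‖ ^ 2 *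
            ‖∑ n ∈ Finset.range N,
                Complex.exp (2 * π * Complex.I * n * (∑ i, (k i : ℝ) * α i))‖ ^ 2)
          ≤ C ^ 2 * (∑' k : Fin m → ℤ, ‖(fun i => (k i : ℝ))‖ ^ (2 * r) * ‖a k‖ ^ 2) *
              ((N : ℝ) ^ (1 - r / κ)) ^ 2 := by
  have hκ : 0 < κ := hr.trans hrκ
  have ht0 : 0 < r / κ := div_pos hr hκ
  have ht1 : r / κ < 1 := (div_lt_one hκ).2 hrκ
  refine ⟨(2 * D) ^ (-(r / κ)), by positivity, ?_⟩
  have hC : 0 < (2 * D) ^ (-(r / κ)) := by positivity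
  intro a ha0 hsum N hN
  have hN1 : (1 : ℝ) ≤ (N : ℝ) := by exact_mod_cast hN
  have key : ∀ k : Fin m → ℤ, ‖a k‖ ^ 2 *
      ‖∑ n ∈ Finset.range N,
          Complex.exp (2 * π * Complex.I * n * (∑ i, (k i : ℝ) * α i))‖ ^ 2
      ≤ ((2 * D) ^ (-(r / κ))) ^ 2 * ((N : ℝ) ^ (1 - r / κ)) ^ 2 *
        (‖(fun i => (k i : ℝ))‖ ^ (2 * r) * ‖a k‖ ^ 2) := by
    intro k
    by_cases hk : k = 0
    · simp [hk, ha0]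
    have hKpos : 0 < ‖(fun i => (k i : ℝ))‖ := by
      rw [norm_pos_iff]
      intro h
      apply hk
      funext i
      have h2 := congrFun h i
      simp only [Pi.zero_apply] at h2
      exact_mod_cast h2
    have hδ0 : 0 < D * ‖(fun i => (k i : ℝ))‖ ^ (-κ) := by positivity
    have hA1 := norm_geom_sum_le (∑ i, (k i : ℝ) * α i) hδ0 (hdioph k hk) N
    have hA2 := norm_geom_sum_le_card (∑ i, (k i : ℝ) * α i) N
    set A : ℂ := ∑ n ∈ Finset.range N,
        Complex.exp (2 * π * Complex.I * n * ((∑ i, (k i : ℝ) * α i : ℝ) : ℂ))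
    set K : ℝ := ‖(fun i => (k i : ℝ))‖
    set δ : ℝ := D * K ^ (-κ)
    have hmin0 : 0 < min (N : ℝ) (1 / (2 * δ)) := lt_min (by linarith) (by positivity)
    have hinterp : ‖A‖ ≤ (N : ℝ) ^ (1 - r / κ) * (1 / (2 * δ)) ^ (r / κ) := by
      refine (le_min hA2 hA1).trans ?_
      calc min (N : ℝ) (1 / (2 * δ))
          = (min (N : ℝ) (1 / (2 * δ))) ^ (1 - r / κ)
            * (min (N : ℝ) (1 / (2 * δ))) ^ (r / κ) := by
            rw [← Real.rpow_add hmin0]; norm_num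
        _ ≤ (N : ℝ) ^ (1 - r / κ) * (1 / (2 * δ)) ^ (r / κ) :=
            mul_le_mul (Real.rpow_le_rpow hmin0.le (min_le_left _ _) (by linarith))
              (Real.rpow_le_rpow hmin0.le (min_le_right _ _) ht0.le)
              (by positivity) (by positivity)
    have hKκ : 0 < K ^ κ := Real.rpow_pos_of_pos hKpos κ
    have hδeq : 1 / (2 * δ) = K ^ κ / (2 * D) := by
      rw [show δ = D * K ^ (-κ) from rfl, Real.rpow_neg hKpos.le]
      field_simp
    have hpow : (1 / (2 * δ)) ^ (r / κ) = (2 * D) ^ (-(r / κ)) * K ^ r := by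
      rw [hδeq, Real.div_rpow hKκ.le (by positivity), ← Real.rpow_mul hKpos.le,
        show κ * (r / κ) = r by field_simp, Real.rpow_neg (by positivity : (0:ℝ) ≤ 2 * D),
        div_eq_mul_inv, mul_comm]
    have hfinal : ‖A‖ ≤ (2 * D) ^ (-(r / κ)) * K ^ r * (N : ℝ) ^ (1 - r / κ) := by
      rw [← hpow]; linarith [hinterp]
    have hK2r : K ^ (2 * r) = (K ^ r) ^ 2 := by
      rw [show (2 * r) = r * 2 by ring, Real.rpow_mul hKpos.le, Real.rpow_two]
    calc ‖a k‖ ^ 2 * ‖A‖ ^ 2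
        ≤ ‖a k‖ ^ 2 * ((2 * D) ^ (-(r / κ)) * K ^ r * (N : ℝ) ^ (1 - r / κ)) ^ 2 := by
          apply mul_le_mul_of_nonneg_left _ (by positivity)
          exact pow_le_pow_left₀ (norm_nonneg _) hfinal 2
      _ = ((2 * D) ^ (-(r / κ))) ^ 2 * ((N : ℝ) ^ (1 - r / κ)) ^ 2
            * (K ^ (2 * r) * ‖a k‖ ^ 2) := by rw [hK2r]; ring
  have hsum2 : Summable (fun k : Fin m → ℤ =>
      ((2 * D) ^ (-(r / κ))) ^ 2 * ((N : ℝ) ^ (1 - r / κ)) ^ 2 *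
        (‖(fun i => (k i : ℝ))‖ ^ (2 * r) * ‖a k‖ ^ 2)) := hsum.mul_left _
  have hsum1 : Summable (fun k : Fin m → ℤ => ‖a k‖ ^ 2 *
      ‖∑ n ∈ Finset.range N,
          Complex.exp (2 * π * Complex.I * n * (∑ i, (k i : ℝ) * α i))‖ ^ 2) :=
    Summable.of_nonneg_of_le (fun k => by positivity) key hsum2
  calc (∑' k : Fin m → ℤ, ‖a k‖ ^ 2 *
          ‖∑ n ∈ Finset.range N,
              Complex.exp (2 * π * Complex.I * n * (∑ i, (k i : ℝ) * α i))‖ ^ 2)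
      ≤ ∑' k : Fin m → ℤ, ((2 * D) ^ (-(r / κ))) ^ 2 * ((N : ℝ) ^ (1 - r / κ)) ^ 2 *
          (‖(fun i => (k i : ℝ))‖ ^ (2 * r) * ‖a k‖ ^ 2) := Summable.tsum_le_tsum key hsum1 hsum2
    _ = ((2 * D) ^ (-(r / κ))) ^ 2 *
          (∑' k : Fin m → ℤ, ‖(fun i => (k i : ℝ))‖ ^ (2 * r) * ‖a k‖ ^ 2) *
            ((N : ℝ) ^ (1 - r / κ)) ^ 2 := by rw [tsum_mul_left]; ring
end

section
/- Let (Ω, μ, f) be a probability-preserving system, τ : Ω → ℝ^d, and suppose there is ε > 0 such that for every K > 0, the sets X_{K,N} := {x : #{n : |n| < N, ‖τ_n(x)‖ ≤ K log N} ≥ N^{1/4 - ε}} satisfy N μ(X_{K,N}) → 0. Let 𝔪_N(x) = N^{-1/2} Σ_{n=0}^{N-1} δ_{τ_n(x)}. Then there exist sets X̂_N ⊂ Ω with μ(X̂_N) → 1 such that for every r ≥ 3, every K > 0, and every choice x_N ∈ X̂_N: ∫ 𝔪_N(x_N)^{r-1}(B(t, K log N)) d𝔪_N(x_N)(t) → 0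 as N → ∞. -/
open MeasureTheory Filter
open scoped Classical

/-- property (b) of the CLT criterion for the random measures `𝔪_N`.
Assume there is `ε > 0` such that for every `K > 0` the sets
`X_{K,N} = {x : #{n : |n| < N, ‖τ_n(x)‖ ≤ K log N} ≥ N^{1/4-ε}}` satisfy `N μ(X_{K,N}) → 0`.
Then there are sets `X̂_N` with `μ(X̂_N) → 1` such that for every `r ≥ 3`, every `K > 0` and
every choice `x_N ∈ X̂_N`,
`∫ 𝔪_N(x_N)^{r-1}(B(t, K log N)) d𝔪_N(x_N)(t)
  = N^{-r/2} Σ_{n<N} (#{j<N : ‖τ_j(x_N) - τ_n(x_N)‖ ≤ K log N})^{r-1} → 0`. -/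
theorem random_measures_property_b
    {Ω : Type*} [MeasurableSpace Ω] {d : ℕ}
    (μ : Measure Ω) [IsProbabilityMeasure μ]
    (f : Ω ≃ᵐ Ω) (hf : MeasurePreserving f μ μ)
    (τ : Ω → EuclideanSpace ℝ (Fin d))
    (T : ℤ → Ω → EuclideanSpace ℝ (Fin d))
    (hTpos : ∀ (n : ℕ) (x : Ω), T n x = ∑ j ∈ Finset.range n, τ ((⇑f)^[j] x))
    (hTneg : ∀ (n : ℕ) (x : Ω), T (-(n : ℤ)) x = -(T n ((⇑f.symm)^[n] x)))
    (ε : ℝ) (hε : 0 < ε)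
    (hXKN : ∀ K : ℝ, 0 < K →
      Tendsto (fun N : ℕ => (N : ℝ) *
        (μ {x | (N : ℝ) ^ ((1:ℝ)/4 - ε) ≤
          (((Finset.Icc (-(N : ℤ)) (N : ℤ)).filter
            (fun n : ℤ => |(n : ℝ)| < (N : ℝ) ∧ ‖T n x‖ ≤ K * Real.log N)).card : ℝ)}).toReal)
        atTop (nhds 0)) :
    ∃ Xhat : ℕ → Set Ω,
      Tendsto (fun N => (μ (Xhat N)).toReal) atTop (nhds 1) ∧
      ∀ r : ℕ, 3 ≤ r → ∀ K : ℝ, 0 < K → ∀ x : ℕ → Ω, (∀ N, x N ∈ Xhat N) →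
        Tendsto (fun N : ℕ => (N : ℝ) ^ (-(r : ℝ) / 2) *
          ∑ n ∈ Finset.range N,
            ((((Finset.range N).filter
              (fun j => ‖T j (x N) - T n (x N)‖ ≤ K * Real.log N)).card : ℝ)) ^ (r - 1))
          atTop (nhds 0) := by

  -- Cocycle identities
  have hT_add : ∀ (n m : ℕ) (y : Ω), T ((n + m : ℕ) : ℤ) y = T n y + T m ((⇑f)^[n] y) := by
    intro n m y
    rw [hTpos, hTpos, hTpos, Finset.sum_range_add]
    congr 1
    refine Finset.sum_congr rfl fun j _ => ?_
    rw [add_comm n j, Function.iterate_add_apply]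
  have hT_key : ∀ (j n : ℕ) (y : Ω), T ((j : ℤ) - (n : ℤ)) ((⇑f)^[n] y) = T j y - T n y := by
    intro j n y
    rcases le_or_gt n j with h | h
    · have h1 : (j : ℤ) - (n : ℤ) = ((j - n : ℕ) : ℤ) := by omega
      have h2 := hT_add n (j - n) y
      rw [Nat.add_sub_cancel' h] at h2
      rw [h1, h2]; abel
    · have h1 : (j : ℤ) - (n : ℤ) = -(((n - j : ℕ) : ℤ)) := by omega
      rw [h1, hTneg]
      have hiter : (⇑f.symm)^[n - j] ((⇑f)^[n] y) = (⇑f)^[j] y := by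
        have h2 : (⇑f)^[n] y = (⇑f)^[n - j] ((⇑f)^[j] y) := by
          rw [← Function.iterate_add_apply]; congr 1; omega
        rw [h2]
        exact (Function.LeftInverse.iterate (fun z => f.symm_apply_apply z) (n - j)) _
      rw [hiter]
      have h2 := hT_add j (n - j) y
      rw [Nat.add_sub_cancel' h.le] at h2
      rw [h2]; abel
  -- measure invariance under iterates, for arbitrary sets
  have hemb : ∀ n : ℕ, MeasurableEmbedding ((⇑f)^[n]) := by
    intro n
    induction n with
    | zero => exact MeasurableEmbedding.id
    | succ n ih =>
      rw [Function.iterate_succ]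
      exact ih.comp f.measurableEmbedding
  have hpre : ∀ (n : ℕ) (S : Set Ω), μ ((⇑f)^[n] ⁻¹' S) = μ S :=
    fun n S => (hf.iterate n).measure_preimage_emb (hemb n) S
  -- the bad sets
  let X : ℕ → ℕ → Set Ω := fun k N => {x | (N : ℝ) ^ ((1:ℝ)/4 - ε) ≤
      (((Finset.Icc (-(N : ℤ)) (N : ℤ)).filter
        (fun n : ℤ => |(n : ℝ)| < (N : ℝ) ∧ ‖T n x‖ ≤ (k : ℝ) * Real.log N)).card : ℝ)}
  -- diagonal extraction
  have hex : ∀ k : ℕ, ∃ M : ℕ, ∀ N, M ≤ N → (N:ℝ) * (μ (X (k+1) N)).toReal ≤ 1/((k:ℝ)+1) := by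
    intro k
    have hpos : (0:ℝ) < (((k+1 : ℕ)) : ℝ) := by positivity
    have h := (hXKN (((k+1 : ℕ)) : ℝ) hpos).eventually_lt_const
      (show (0:ℝ) < 1/((k:ℝ)+1) by positivity)
    rw [eventually_atTop] at h
    obtain ⟨M, hM⟩ := h
    exact ⟨M, fun N hN => le_of_lt (hM N hN)⟩
  choose M0 hM0 using hex
  let M : ℕ → ℕ := fun k => Nat.rec (M0 0) (fun k ih => max (ih + 1) (max (M0 k) 1)) k
  have hMsucc : ∀ k, M (k+1) = max (M k + 1) (max (M0 k) 1) := fun k => rfl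
  have hMmono : StrictMono M := strictMono_nat_of_lt_succ fun k => by
    rw [hMsucc]; omega
  let g : ℕ → ℕ := fun N => @Nat.findGreatest (fun k => M k ≤ N) (fun _ => Nat.decLe _ _) N
  have h_g_ge : ∀ k N, M k ≤ N → k ≤ g N :=
    fun k N h => @Nat.le_findGreatest k (fun k => M k ≤ N) (fun _ => Nat.decLe _ _) N
      (le_trans hMmono.le_apply h) h
  have hg_top : Tendsto g atTop atTop :=
    tendsto_atTop.2 fun k => eventually_atTop.2 ⟨M k, fun N hN => h_g_ge k N hN⟩
  have h_g_spec : ∀ N, M 1 ≤ N → M (g N) ≤ N := by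
    intro N hN
    exact @Nat.findGreatest_spec 1 (fun k => M k ≤ N) (fun _ => Nat.decLe _ _) N
      (le_trans hMmono.le_apply hN) hN
  have h_g_bound : ∀ N, M 1 ≤ N → (N:ℝ) * (μ (X (g N) N)).toReal ≤ 1/(g N : ℝ) := by
    intro N hN
    have h1 : 1 ≤ g N := h_g_ge 1 N hN
    obtain ⟨k, hk⟩ : ∃ k, g N = k + 1 := ⟨g N - 1, by omega⟩
    have hM0le : M0 k ≤ M (k+1) := by rw [hMsucc]; omega
    have := hM0 k N (le_trans hM0le (by rw [← hk]; exact h_g_spec N hN))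
    rw [hk]; push_cast; push_cast at this; linarith
  -- the good sets
  refine ⟨fun N => (⋃ n ∈ Finset.range N, ((⇑f)^[n]) ⁻¹' (X (g N) N))ᶜ, ?_, ?_⟩
  · -- μ (Xhat N) → 1
    set Xhat : ℕ → Set Ω := fun N => (⋃ n ∈ Finset.range N, ((⇑f)^[n]) ⁻¹' (X (g N) N))ᶜ with hXhat
    have hcompl : ∀ N, (μ (Xhat N)ᶜ).toReal ≤ (N:ℝ) * (μ (X (g N) N)).toReal := by
      intro N
      have h1 : μ (Xhat N)ᶜ ≤ (N : ENNReal) * μ (X (g N) N) := by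
        calc μ (Xhat N)ᶜ = μ (⋃ n ∈ Finset.range N, ((⇑f)^[n]) ⁻¹' (X (g N) N)) := by
              rw [hXhat, compl_compl]
          _ ≤ ∑ n ∈ Finset.range N, μ (((⇑f)^[n]) ⁻¹' (X (g N) N)) := measure_biUnion_finset_le _ _
          _ = (N : ENNReal) * μ (X (g N) N) := by
              simp [hpre, Finset.sum_const, nsmul_eq_mul]
      calc (μ (Xhat N)ᶜ).toReal ≤ ((N : ENNReal) * μ (X (g N) N)).toReal :=
            ENNReal.toReal_mono (ENNReal.mul_ne_top (ENNReal.natCast_ne_top N) (measure_ne_top μ _)) h1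
        _ = (N:ℝ) * (μ (X (g N) N)).toReal := by rw [ENNReal.toReal_mul]; simp
    have hto0 : Tendsto (fun N => (μ (Xhat N)ᶜ).toReal) atTop (nhds 0) := by
      have hbnd : Tendsto (fun N => 1/((g N : ℕ) : ℝ)) atTop (nhds 0) :=
        tendsto_one_div_atTop_nhds_zero_nat.comp hg_top
      refine squeeze_zero' (Eventually.of_forall fun N => ENNReal.toReal_nonneg) ?_ hbnd
      filter_upwards [eventually_ge_atTop (M 1)] with N hN
      exact le_trans (hcompl N) (h_g_bound N hN)
    have hlb : ∀ N, 1 - (μ (Xhat N)ᶜ).toReal ≤ (μ (Xhat N)).toReal := by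
      intro N
      have h1 : (1 : ENNReal) ≤ μ (Xhat N) + μ (Xhat N)ᶜ := by
        rw [← measure_univ (μ := μ), ← Set.union_compl_self (Xhat N)]
        exact measure_union_le _ _
      have h2 := ENNReal.toReal_mono (a := 1)
        (ENNReal.add_ne_top.2 ⟨measure_ne_top μ _, measure_ne_top μ _⟩) h1
      rw [ENNReal.toReal_add (measure_ne_top μ _) (measure_ne_top μ _), ENNReal.toReal_one] at h2
      linarith
    have hub : ∀ N, (μ (Xhat N)).toReal ≤ 1 := fun N => by
      simpa using ENNReal.toReal_mono ENNReal.one_ne_top (prob_le_one (μ := μ) (s := Xhat N))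
    have hl : Tendsto (fun N => 1 - (μ (Xhat N)ᶜ).toReal) atTop (nhds 1) := by
      simpa using (tendsto_const_nhds (x := (1:ℝ)) (f := atTop)).sub hto0
    exact tendsto_of_tendsto_of_tendsto_of_le_of_le hl tendsto_const_nhds hlb hub
  · -- main convergence
    intro r hr K hK x hx
    have hr3 : (3:ℝ) ≤ (r:ℝ) := by exact_mod_cast hr
    set e : ℝ := -(r:ℝ)/2 + (1 + ((1:ℝ)/4 - ε) * ((r:ℝ) - 1)) with he
    have he_neg : e < 0 := by rw [he]; nlinarith
    have hlim : Tendsto (fun N : ℕ => (N:ℝ) ^ e) atTop (nhds 0) := by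
      have h1 := tendsto_rpow_neg_atTop (show (0:ℝ) < -e by linarith)
      rw [neg_neg] at h1
      exact h1.comp tendsto_natCast_atTop_atTop
    have hT_key' : ∀ (j : ℤ), 0 ≤ j → ∀ (n : ℕ) (y : Ω),
        T (j - (n:ℤ)) ((⇑f)^[n] y) = T j y - T (n:ℤ) y := by
      intro j hj n y
      obtain ⟨a, rfl⟩ := Int.eq_ofNat_of_zero_le hj
      exact hT_key a n y
    refine squeeze_zero' (Eventually.of_forall fun N => ?_) ?_ hlim
    · have h1 : (0:ℝ) ≤ (N:ℝ) ^ (-(r:ℝ)/2) := Real.rpow_nonneg (Nat.cast_nonneg N) _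
      exact mul_nonneg h1 (Finset.sum_nonneg fun n _ => pow_nonneg (Nat.cast_nonneg _) _)
    · filter_upwards [eventually_ge_atTop 1, hg_top.eventually_ge_atTop ⌈K⌉₊] with N hN1 hNg
      have hN0 : (0:ℝ) < (N:ℝ) := by exact_mod_cast Nat.pos_of_ne_zero (by omega)
      have hlogN : 0 ≤ Real.log N := Real.log_nonneg (by exact_mod_cast hN1)
      have hKg : K ≤ (g N : ℝ) := le_trans (Nat.le_ceil K) (by exact_mod_cast hNg)
      have hxmem := hx N
      simp only [Set.mem_compl_iff, Set.mem_iUnion, Finset.mem_range, Set.mem_preimage,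
        not_exists] at hxmem
      have hmemZ : ∀ (j : ℤ), (j ∈ (do let a ← Finset.range N; pure ((a:ℤ)))) ↔
          0 ≤ j ∧ j < N := by
        intro j
        constructor
        · intro h
          obtain ⟨a, ha, rfl⟩ := by simpa using h
          omega
        · rintro ⟨h0, h1⟩
          simpa using ⟨j.toNat, by omega, by omega⟩
      have hterm : ∀ n ∈ Finset.range N,
          ((((Finset.range N).filter
            (fun j => ‖T j (x N) - T n (x N)‖ ≤ K * Real.log N)).card : ℝ)) ^ (r - 1)
          ≤ ((N:ℝ) ^ ((1:ℝ)/4 - ε)) ^ (r - 1) := by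
        intro n hn
        rw [Finset.mem_range] at hn
        have hnotin : ((⇑f)^[n] (x N)) ∉ X (g N) N := hxmem n hn
        have hcardZ : (((Finset.Icc (-(N : ℤ)) (N : ℤ)).filter
            (fun m : ℤ => |(m : ℝ)| < (N : ℝ) ∧
              ‖T m ((⇑f)^[n] (x N))‖ ≤ ((g N : ℕ) : ℝ) * Real.log N)).card : ℝ)
            < (N : ℝ) ^ ((1:ℝ)/4 - ε) := by
          by_contra hcon
          exact hnotin (le_of_not_gt hcon)
        have hcard_le : ((Finset.range N).filter
              (fun j => ‖T j (x N) - T n (x N)‖ ≤ K * Real.log N)).card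
            ≤ ((Finset.Icc (-(N : ℤ)) (N : ℤ)).filter
              (fun m : ℤ => |(m : ℝ)| < (N : ℝ) ∧
                ‖T m ((⇑f)^[n] (x N))‖ ≤ ((g N : ℕ) : ℝ) * Real.log N)).card := by
          apply Finset.card_le_card_of_injOn (fun j => j - (n : ℤ))
          · intro j hj
            rw [Finset.mem_coe, Finset.mem_filter] at hj
            obtain ⟨hjmem, hjnorm⟩ := hj
            rw [hmemZ] at hjmem
            obtain ⟨hj0, hjN⟩ := hjmem
            beta_reduce
            rw [Finset.mem_coe, Finset.mem_filter, Finset.mem_Icc]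
            refine ⟨⟨by omega, by omega⟩, ?_, ?_⟩
            · have habs : |j - (n : ℤ)| < (N : ℤ) := abs_lt.mpr ⟨by omega, by omega⟩
              have : ((|j - (n:ℤ)| : ℤ) : ℝ) < ((N : ℤ) : ℝ) := by exact_mod_cast habs
              rw [Int.cast_abs] at this
              simpa using this
            · rw [hT_key' j hj0 n (x N)]
              refine le_trans hjnorm (mul_le_mul_of_nonneg_right hKg hlogN)
          · intro a _ b _ hab
            simpa using hab
        refine pow_le_pow_left₀ (Nat.cast_nonneg _) ?_ _
        exact le_of_lt (lt_of_le_of_lt (by exact_mod_cast hcard_le) hcardZ)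
      have hsum : ∑ n ∈ Finset.range N,
            ((((Finset.range N).filter
              (fun j => ‖T j (x N) - T n (x N)‖ ≤ K * Real.log N)).card : ℝ)) ^ (r - 1)
          ≤ (N : ℝ) * ((N:ℝ) ^ ((1:ℝ)/4 - ε)) ^ (r - 1) := by
        refine le_trans (Finset.sum_le_sum hterm) (le_of_eq ?_)
        rw [Finset.sum_const, Finset.card_range, nsmul_eq_mul]
      have hrw : (N:ℝ) ^ (-(r:ℝ)/2) * ((N : ℝ) * ((N:ℝ) ^ ((1:ℝ)/4 - ε)) ^ (r - 1))
          = (N:ℝ) ^ e := by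
        have hcast : ((r - 1 : ℕ) : ℝ) = (r:ℝ) - 1 := by
          rw [Nat.cast_sub (by omega), Nat.cast_one]
        rw [← Real.rpow_natCast ((N:ℝ) ^ ((1:ℝ)/4 - ε)) (r - 1),
          ← Real.rpow_mul (le_of_lt hN0), hcast]
        rw [show (N:ℝ) * (N:ℝ) ^ (((1:ℝ)/4 - ε) * ((r:ℝ) - 1))
            = (N:ℝ) ^ ((1:ℝ) + ((1:ℝ)/4 - ε) * ((r:ℝ) - 1)) by
          rw [Real.rpow_add hN0, Real.rpow_one]]
        rw [← Real.rpow_add hN0, he]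
      refine le_trans ?_ (le_of_eq hrw)
      exact mul_le_mul_of_nonneg_left hsum (Real.rpow_nonneg (Nat.cast_nonneg N) _)
end

section
/- Let H be a Lie group with right-invariant metric d_H, Γ ≤ H a discrete subgroup with systole bound c := inf_{y∈H} inf_{γ≠e} d_H(y, yγ) > c₀ > 0. Suppose {a_j} ⊂ A is a sequence of group elements acting on H with sup-Lipschitz constant C on unit scale (i.e. d_H(by, by') ≤ C d_H(y,y') whenever d_H(y,y') ≤ 1 and b = a_{j+1} - a_j type increments), and suppose that for lifts y, y' ∈ H with y' ∉ H^c(y) there exists j₀ with d_H(a_{j₀}y, a_{j₀}y') > η̄ for some η̄ > 0. Then for 0 < η < η̄ with c ≥ (C + 1/4)η, and for points in Y = H/Γ at distance ≤ η/4 with y' ∉ W^c(y), there exists j with d_Y(a_j y, a_j y') ≥ η/4. -/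
/-- separation in the quotient `Y = H/Γ`.  Let `H` be a group with a
(right-invariant) metric, `Γ ≤ H` a discrete subgroup with systole `≥ c > 0`, and let
`a_j : H → H` be a sequence of maps (with `a_0 = id`) commuting with the right `Γ`-action,
whose one-step increments are `C`-Lipschitz at unit scale.  Suppose that on lifts the points
eventually separate: `∃ j₀, d_H(a_{j₀} y, a_{j₀} y') > ηbar`.  Then for `0 < η < ηbar` with
`c ≥ (C + 1/4) η`, whenever `d_H(y, y') ≤ η/4` there exists `j` with
`d_Y(a_j y, a_j y') ≥ η/4`, i.e. `d_H(a_j y, (a_j y')·γ) ≥ η/4` for every `γ ∈ Γ`. -/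
theorem quotient_separation
    {H : Type*} [Group H] [MetricSpace H]
    (Γ : Subgroup H) (c : ℝ) (hc : 0 < c)
    (hsystole : ∀ y : H, ∀ γ ∈ Γ, γ ≠ 1 → c ≤ dist y (y * γ))
    (a : ℕ → H → H) (ha0 : ∀ y, a 0 y = y)
    (hequiv : ∀ j (y : H), ∀ γ ∈ Γ, a j (y * γ) = a j y * γ)
    (C : ℝ) (hC : 1 ≤ C)
    (hlip : ∀ j (y y' : H), dist (a j y) (a j y') ≤ 1 →
      dist (a (j + 1) y) (a (j + 1) y') ≤ C * dist (a j y) (a j y'))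
    (ηbar η : ℝ) (hη0 : 0 < η) (hηηbar : η < ηbar) (hη1 : η ≤ 1) (hcη : (C + 1/4) * η ≤ c)
    (y y' : H) (hclose : dist y y' ≤ η / 4)
    (hsep : ∃ j₀, ηbar < dist (a j₀ y) (a j₀ y')) :
    ∃ j, ∀ γ ∈ Γ, η / 4 ≤ dist (a j y) (a j y' * γ) := by
  have hex : ∃ j, η / 4 < dist (a j y) (a j y') := by
    obtain ⟨j₀, hj₀⟩ := hsep
    exact ⟨j₀, lt_trans (by linarith) hj₀⟩
  classical
  let j := Nat.find hex
  have hj : η / 4 < dist (a j y) (a j y') := Nat.find_spec hex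
  have hjne : j ≠ 0 := by
    intro h
    have := hj
    rw [h, ha0, ha0] at this
    linarith
  obtain ⟨k, hk⟩ := Nat.exists_eq_succ_of_ne_zero hjne
  have hprev : ¬ (η / 4 < dist (a k y) (a k y')) :=
    Nat.find_min hex (by omega)
  push_neg at hprev
  have hub : dist (a j y) (a j y') ≤ C * (η / 4) := by
    have h1 : dist (a k y) (a k y') ≤ 1 := le_trans hprev (by linarith)
    have := hlip k y y' h1
    rw [hk]
    calc dist (a (k+1) y) (a (k+1) y') ≤ C * dist (a k y) (a k y') := this
      _ ≤ C * (η / 4) := by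
        apply mul_le_mul_of_nonneg_left hprev (by linarith)
  refine ⟨j, fun γ hγ => ?_⟩
  by_cases hγ1 : γ = 1
  · subst hγ1; simpa using le_of_lt hj
  · have hsys := hsystole (a j y') γ hγ hγ1
    have htri : dist (a j y') (a j y' * γ) ≤
        dist (a j y') (a j y) + dist (a j y) (a j y' * γ) := dist_triangle _ _ _
    have hsym : dist (a j y') (a j y) = dist (a j y) (a j y') := dist_comm _ _
    nlinarith
end
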